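/- For every natural number k ≥ 0, the sum of the first 4k+2 Lucas numbers satisfies S^L_{4k+2} = L_{4k+4} − 3 = L_{2k+3}·L_{2k+1}, and 2k+3 is the largest index of a Lucas number dividing this sum: for every m > 2k+3, L_m does not divide L_{4k+4} − 3. -/

import Mathlib

/-- The Lucas numbers: L 0 = 2, L 1 = 1, L (n+2) = L (n+1) + L n. -/
def lucas : ℕ → ℕ
  | 0 => 2
  | 1 => 1
  | n + 2 => lucas n + lucas (n + 1)

lemma lucas_add_two (n : ℕ) : lucas (n + 2) = lucas n + lucas (n + 1) := rfl

lemma lucas_pos : ∀ n, 0 < lucas n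
  | 0 => by simp [lucas]
  | 1 => by simp [lucas]
  | n + 2 => by rw [lucas_add_two]; have := lucas_pos n; omega

lemma lucas_lt (n : ℕ) : lucas (n + 1) < lucas (n + 2) := by
  rw [lucas_add_two]; have := lucas_pos n; omega

lemma lucas_mono : ∀ {a b : ℕ}, 1 ≤ a → a ≤ b → lucas a ≤ lucas b := by
  intro a b ha hab
  induction b with
  | zero => omega
  | succ n ih =>
    rcases Nat.lt_or_ge a (n + 1) with h | h
    · have h1 : a ≤ n := by omega
      have h2 : 1 ≤ n := by omega
      obtain ⟨t, rfl⟩ : ∃ t, n = t + 1 := ⟨n - 1, by omega⟩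
      exact (ih h1).trans (lucas_lt t).le
    · have : a = n + 1 := by omega
      subst this; rfl

/-- the three basic doubling identities, proved simultaneously -/
lemma lucas_ABC : ∀ b : ℕ,
    ((lucas (2 * b) : ℤ) = (lucas b : ℤ) ^ 2 - 2 * (-1) ^ b) ∧
    ((lucas (2 * b + 1) : ℤ) = (lucas b : ℤ) * lucas (b + 1) - (-1) ^ b) ∧
    ((lucas b : ℤ) * lucas (b + 2) = (lucas (b + 1) : ℤ) ^ 2 + 5 * (-1) ^ b) := by
  intro b
  induction b with
  | zero => norm_num [lucas]
  | succ b ih =>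
    obtain ⟨hA, hB, hC⟩ := ih
    have e1 : 2 * (b + 1) = 2 * b + 2 := by ring
    have e2 : (lucas (2 * b + 2) : ℤ) = lucas (2 * b) + lucas (2 * b + 1) := by
      rw [lucas_add_two]; push_cast; ring
    have e3 : (lucas (2 * b + 3) : ℤ) = lucas (2 * b + 1) + lucas (2 * b + 2) := by
      rw [show 2 * b + 3 = (2 * b + 1) + 2 by ring, lucas_add_two]; push_cast; ring
    have e4 : (lucas (b + 2) : ℤ) = lucas b + lucas (b + 1) := by
      rw [lucas_add_two]; push_cast; ring
    have e5 : (lucas (b + 3) : ℤ) = lucas (b + 1) + lucas (b + 2) := by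
      rw [show b + 3 = (b + 1) + 2 by ring, lucas_add_two]; push_cast; ring
    have hC' := hC
    rw [e4] at hC'
    refine ⟨?_, ?_, ?_⟩
    · rw [e1, e2]
      linear_combination hA + hB + hC'
    · rw [show 2 * (b + 1) + 1 = 2 * b + 3 by ring, e3, e2,
        show b + 1 + 1 = b + 2 by omega, e4]
      linear_combination hA + 2 * hB + hC'
    · rw [show b + 1 + 2 = b + 3 by omega, show b + 1 + 1 = b + 2 by omega, e5, e4]
      linear_combination -hC'

/-- the addition/subtraction identity: L(a+2b) + (-1)^b L(a) = L(a+b) L(b). -/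
lemma lucas_P : ∀ a b : ℕ,
    (lucas (a + 2 * b) : ℤ) + (-1) ^ b * lucas a = (lucas (a + b) : ℤ) * lucas b
  | 0, b => by
    have h := (lucas_ABC b).1
    simp only [Nat.zero_add, lucas]
    push_cast
    rw [h]; ring
  | 1, b => by
    have h := (lucas_ABC b).2.1
    rw [show 1 + 2 * b = 2 * b + 1 by ring, show 1 + b = b + 1 by ring, h]
    simp [lucas]; ring
  | a + 2, b => by
    have h1 := lucas_P a b
    have h2 := lucas_P (a + 1) b
    have e1 : (lucas (a + 2 + 2 * b) : ℤ) = lucas (a + 2 * b) + lucas (a + 2 * b + 1) := by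
      rw [show a + 2 + 2 * b = (a + 2 * b) + 2 by ring, lucas_add_two]; push_cast; ring
    have e2 : (lucas (a + 2 + b) : ℤ) = lucas (a + b) + lucas (a + b + 1) := by
      rw [show a + 2 + b = (a + b) + 2 by ring, lucas_add_two]; push_cast; ring
    have e3 : (lucas (a + 2) : ℤ) = lucas a + lucas (a + 1) := by
      rw [lucas_add_two]; push_cast; ring
    rw [e1, e2, e3]
    rw [show a + 1 + 2 * b = a + 2 * b + 1 by ring, show a + 1 + b = a + b + 1 by ring] at h2
    linear_combination h1 + h2

lemma lucas_sum (n : ℕ) : (∑ i ∈ Finset.Icc 1 n, lucas i) + 3 = lucas (n + 2) := by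
  induction n with
  | zero => simp [lucas]
  | succ n ih =>
    rw [Finset.sum_Icc_succ_top (by omega : 1 ≤ n + 1)]
    have h := lucas_add_two (n + 1)
    rw [show n + 1 + 1 = n + 2 by omega] at h
    omega

lemma lucas_prod (k : ℕ) : lucas (4 * k + 4) = lucas (2 * k + 3) * lucas (2 * k + 1) + 3 := by
  have h := lucas_P 2 (2 * k + 1)
  rw [show 2 + 2 * (2 * k + 1) = 4 * k + 4 by ring, show 2 + (2 * k + 1) = 2 * k + 3 by ring,
    Odd.neg_one_pow (by exact ⟨k, by ring⟩)] at h
  have h2 : (lucas 2 : ℤ) = 3 := by norm_num [lucas]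
  rw [h2] at h
  have : (lucas (4 * k + 4) : ℤ) = lucas (2 * k + 3) * lucas (2 * k + 1) + 3 := by
    linear_combination h
  exact_mod_cast this

/-- The sum of the first 4k+2 Lucas numbers equals L_{4k+4} - 3 = L_{2k+3} * L_{2k+1},
and 2k+3 is the largest index of a Lucas number dividing this sum. -/
theorem lucas_partial_sum_4k2 (k : ℕ) :
    (∑ i ∈ Finset.Icc 1 (4 * k + 2), lucas i) = lucas (4 * k + 4) - 3 ∧
    lucas (4 * k + 4) - 3 = lucas (2 * k + 3) * lucas (2 * k + 1) ∧
    (∀ m : ℕ, 2 * k + 3 < m → ¬ lucas m ∣ lucas (4 * k + 4) - 3) := by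
  have hsum := lucas_sum (4 * k + 2)
  rw [show 4 * k + 2 + 2 = 4 * k + 4 by ring] at hsum
  have hprod := lucas_prod k
  refine ⟨by omega, by omega, ?_⟩
  intro m hm hdvd
  have hd3 : 3 ≤ lucas (4 * k + 4) := by omega
  have hpos : 0 < lucas (2 * k + 3) * lucas (2 * k + 1) :=
    Nat.mul_pos (lucas_pos _) (lucas_pos _)
  rcases Nat.lt_or_ge m (4 * k + 4) with hlt | hge
  · -- 2k+3 < m < 4k+4, hence k ≥ 1 and m ≥ 6
    have hk : 1 ≤ k := by omega
    set j := 4 * k + 4 - m with hj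
    set a := m - j with ha
    have hj1 : 1 ≤ j := by omega
    have ha4 : 4 ≤ a := by omega
    have ham : a + j = m := by omega
    have haj : a + 2 * j = 4 * k + 4 := by omega
    have hP := lucas_P a j
    rw [ham, haj] at hP
    -- cast the divisibility to ℤ
    have hdvdZ : (lucas m : ℤ) ∣ (lucas (4 * k + 4) : ℤ) - 3 := by
      obtain ⟨c, hc⟩ := hdvd
      refine ⟨c, ?_⟩
      have : lucas (4 * k + 4) = lucas m * c + 3 := by omega
      push_cast [this]; ring
    have hdvd2 : (lucas m : ℤ) ∣ (-1) ^ j * lucas a + 3 := by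
      have h1 : (lucas m : ℤ) ∣ (lucas m : ℤ) * lucas j := Dvd.intro _ rfl
      have h2 := dvd_sub h1 hdvdZ
      have : (lucas m : ℤ) * lucas j - ((lucas (4 * k + 4) : ℤ) - 3) =
          (-1) ^ j * lucas a + 3 := by linear_combination -hP
      rwa [this] at h2
    -- size bounds
    obtain ⟨p, rfl⟩ : ∃ p, m = p + 2 := ⟨m - 2, by omega⟩
    have hlm : lucas (p + 2) = lucas p + lucas (p + 1) := lucas_add_two p
    have hbp : lucas 4 ≤ lucas p := lucas_mono (by omega) (by omega)
    have hb4 : lucas 4 = 7 := by norm_num [lucas, lucas_add_two]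
    have hba : lucas 4 ≤ lucas a := lucas_mono (by omega) ha4
    have hab : lucas a ≤ lucas (p + 1) := lucas_mono (by omega) (by omega)
    rcases Nat.even_or_odd j with hje | hjo
    · rw [Even.neg_one_pow hje, one_mul] at hdvd2
      have hle := Int.le_of_dvd (by positivity) hdvd2
      push_cast at hle
      omega
    · rw [Odd.neg_one_pow hjo] at hdvd2
      rw [show (-1 : ℤ) * lucas a + 3 = -((lucas a : ℤ) - 3) by ring, dvd_neg] at hdvd2
      have hle := Int.le_of_dvd (by omega) hdvd2
      push_cast at hle
      omega
  · -- m ≥ 4k+4: lucas m too large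
    have h1 : lucas (4 * k + 4) ≤ lucas m := lucas_mono (by omega) hge
    have h2 := Nat.le_of_dvd (by omega) hdvd
    omega
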